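/- Every multiplicative seminorm on ℤ bounded above by the usual archimedean absolute value is of one of the following forms: |·|_∞^ε for some ε ∈ [0,1], or |·|_p^ε for some prime p and ε ∈ [0,∞], where |·|^0 denotes the trivial absolute value (equal to 1 on nonzero integers) and |n|_p^∞ is defined to be 0 if p divides n and 1 otherwise. -/

import Mathlib

section Aux
variable {f : ℤ → ℝ} (hnn : ∀ n, 0 ≤ f n) (h0 : f 0 = 0) (h1 : f 1 = 1)
  (hadd : ∀ m n, f (m + n) ≤ f m + f n)
  (hmul : ∀ m n, f (m * n) = f m * f n)
  (hker : ∀ n : ℤ, n ≠ 0 → f n ≠ 0)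

include hnn h1 hmul in
lemma faux_neg (n : ℤ) : f (-n) = f n := by
  have h : f (-1) * f (-1) = 1 := by rw [← hmul]; simpa using h1
  have h2 : f (-1) = 1 := by nlinarith [hnn (-1)]
  have := hmul (-1) n
  simp only [neg_one_mul] at this
  rw [this, h2, one_mul]

include h1 hmul in
lemma faux_pow (n : ℤ) (k : ℕ) : f (n ^ k) = f n ^ k := by
  induction k with
  | zero => simpa using h1
  | succ k ih => rw [pow_succ, pow_succ, hmul, ih]

open Classical in
include hnn h1 hmul in
lemma faux_exists_prime (hkex : ∃ n : ℤ, n ≠ 0 ∧ f n = 0) :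
    ∃ p : ℕ, p.Prime ∧ f p = 0 := by
  obtain ⟨n, hn0, hfn⟩ := hkex
  have hex : ∃ k : ℕ, 0 < k ∧ f k = 0 := by
    refine ⟨n.natAbs, Int.natAbs_pos.mpr hn0, ?_⟩
    rcases Int.natAbs_eq n with h | h
    · rw [← h]; exact hfn
    · rw [← faux_neg hnn h1 hmul, ← h]; exact hfn
  obtain ⟨hppos, hpf⟩ := Nat.find_spec hex
  refine ⟨Nat.find hex, ?_, hpf⟩
  rw [Nat.prime_def_lt]
  constructor
  · have hne1 : Nat.find hex ≠ 1 := by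
      intro h
      rw [h, Nat.cast_one, h1] at hpf
      exact one_ne_zero hpf
    omega
  · intro m hmlt hmdvd
    by_contra hm1
    obtain ⟨k, hk⟩ := hmdvd
    have hm0 : m ≠ 0 := by rintro rfl; simp at hk; all_goals omega
    have hk0 : k ≠ 0 := by rintro rfl; simp at hk; all_goals omega
    have hklt : k < Nat.find hex := by
      rcases Nat.lt_or_ge k (Nat.find hex) with h | h
      · exact h
      · exfalso; have : 2 ≤ m := by omega
        nlinarith
    have : f m * f k = 0 := by
      rw [← hmul, ← hpf]; congr 1; exact_mod_cast hk.symm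
    rcases mul_eq_zero.mp this with h | h
    · exact Nat.find_min hex hmlt ⟨Nat.pos_of_ne_zero hm0, h⟩
    · exact Nat.find_min hex hklt ⟨Nat.pos_of_ne_zero hk0, h⟩

include hnn h1 hadd hmul in
lemma faux_ker {p : ℕ} (hp : p.Prime) (hfp : f p = 0) :
    ∀ n : ℤ, n ≠ 0 → f n = if (p : ℤ) ∣ n then 0 else 1 := by
  intro n hn
  split_ifs with hdvd
  · obtain ⟨k, rfl⟩ := hdvd
    rw [hmul, hfp, zero_mul]
  · have hcop : IsCoprime (n : ℤ) (p : ℤ) := by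
      rw [Int.isCoprime_iff_gcd_eq_one]
      have hnd : ¬ p ∣ n.natAbs := by rwa [← Int.natCast_dvd_natCast, Int.dvd_natAbs]
      have := (Nat.Prime.coprime_iff_not_dvd hp).mpr hnd
      simpa [Int.gcd] using (Nat.coprime_comm.mp this)
    have hmod := Int.ModEq.pow_card_sub_one_eq_one hp hcop
    obtain ⟨m, hm⟩ := hmod.dvd
    have hrep : n ^ (p - 1) = 1 + (p : ℤ) * (-m) := by linarith [hm]
    have hfpm : f ((p : ℤ) * (-m)) = 0 := by rw [hmul, hfp, zero_mul]
    have hle : f (n ^ (p - 1)) ≤ 1 := by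
      rw [hrep]
      calc f (1 + (p : ℤ) * (-m)) ≤ f 1 + f ((p : ℤ) * (-m)) := hadd _ _
      _ = 1 := by rw [h1, hfpm, add_zero]
    have hge : 1 ≤ f (n ^ (p - 1)) := by
      have := hadd (1 + (p : ℤ) * (-m)) (-((p : ℤ) * (-m)))
      simp only [add_neg_cancel_right] at this
      rw [h1, faux_neg hnn h1 hmul, hfpm, add_zero, ← hrep] at this
      exact this
    have heq : f n ^ (p - 1) = 1 := by
      rw [← faux_pow h1 hmul]; linarith
    have hne : p - 1 ≠ 0 := by have := hp.two_le; omega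
    rcases lt_trichotomy (f n) 1 with h | h | h
    · exact absurd heq (by have := pow_lt_one₀ (hnn n) h hne; linarith)
    · exact h
    · exact absurd heq (by have := one_lt_pow₀ h hne; linarith)

include hnn hker in
lemma faux_pos (n : ℤ) (hn : n ≠ 0) : 0 < f n := (hnn n).lt_of_ne' (hker n hn)

/-- extension of `f` to `ℚ`. -/
noncomputable def gaux (x : ℚ) : ℝ := f x.num / f (x.den : ℤ)

include hnn hmul hker in
lemma gaux_div (a b : ℤ) (hb : b ≠ 0) : gaux (f := f) ((a : ℚ) / b) = f a / f b := by
  set x : ℚ := (a : ℚ) / (b : ℚ) with hx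
  have hdpos : 0 < f (x.den : ℤ) := faux_pos hnn hker _ (by exact_mod_cast x.den_nz)
  have hbpos : 0 < f b := faux_pos hnn hker _ hb
  have hcross : x.num * b = a * (x.den : ℤ) := by
    have hq : (x.num : ℚ) / (x.den : ℚ) = (a : ℚ) / (b : ℚ) := by rw [Rat.num_div_den]
    rw [div_eq_div_iff (by exact_mod_cast x.den_nz) (by exact_mod_cast hb)] at hq
    exact_mod_cast hq
  have hfe : f x.num * f b = f a * f (x.den : ℤ) := by
    rw [← hmul, ← hmul, hcross]
  rw [show gaux (f := f) x = f x.num / f (x.den : ℤ) from rfl, div_eq_div_iff hdpos.ne' hbpos.ne']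
  linarith [hfe]

include h1 in
lemma gaux_int (n : ℤ) : gaux (f := f) (n : ℚ) = f n := by
  simp [gaux, Rat.num_intCast, Rat.den_intCast, h1]

include hnn h0 h1 hadd hmul hker in
noncomputable def gnorm : MulRingNorm ℚ where
  toFun := gaux (f := f)
  map_zero' := by simp [gaux, h0]
  map_one' := by simp [gaux, h1]
  map_mul' := by
    intro x y
    have hrep : x * y = ((x.num * y.num : ℤ) : ℚ) / (((x.den : ℤ) * (y.den : ℤ) : ℤ) : ℚ) := by
      push_cast
      conv_lhs => rw [← Rat.num_div_den x, ← Rat.num_div_den y]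
      rw [div_mul_div_comm]
    show gaux (f := f) (x * y) = gaux (f := f) x * gaux (f := f) y
    rw [hrep, gaux_div hnn hmul hker (x.num * y.num) ((x.den : ℤ) * (y.den : ℤ)) (by positivity),
      hmul, hmul]
    show _ = f x.num / f (x.den : ℤ) * (f y.num / f (y.den : ℤ))
    rw [div_mul_div_comm]
  add_le' := by
    intro x y
    have hxd : 0 < f (x.den : ℤ) := faux_pos hnn hker _ (by exact_mod_cast x.den_nz)
    have hyd : 0 < f (y.den : ℤ) := faux_pos hnn hker _ (by exact_mod_cast y.den_nz)
    have hrep : x + y = ((x.num * y.den + x.den * y.num : ℤ) : ℚ)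
        / (((x.den : ℤ) * (y.den : ℤ) : ℤ) : ℚ) := by
      push_cast
      conv_lhs => rw [← Rat.num_div_den x, ← Rat.num_div_den y]
      rw [div_add_div _ _ (by exact_mod_cast x.den_nz) (by exact_mod_cast y.den_nz)]
    show gaux (f := f) (x + y) ≤ gaux (f := f) x + gaux (f := f) y
    rw [hrep, gaux_div hnn hmul hker _ _ (by positivity), hmul]
    show _ ≤ f x.num / f (x.den : ℤ) + f y.num / f (y.den : ℤ)
    rw [div_add_div _ _ hxd.ne' hyd.ne']
    have hnum : f (x.num * y.den + x.den * y.num)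
        ≤ f x.num * f (y.den : ℤ) + f (x.den : ℤ) * f y.num := by
      calc f (x.num * y.den + x.den * y.num) ≤ f (x.num * y.den) + f (x.den * y.num) := hadd _ _
      _ = f x.num * f (y.den : ℤ) + f (x.den : ℤ) * f y.num := by rw [hmul, hmul]
    gcongr
  neg' := by
    intro x
    show gaux (f := f) (-x) = gaux (f := f) x
    simp only [gaux, Rat.neg_num, Rat.neg_den]
    rw [faux_neg hnn h1 hmul]
  eq_zero_of_map_eq_zero' := by
    intro x hx
    have hxd : 0 < f (x.den : ℤ) := faux_pos hnn hker _ (by exact_mod_cast x.den_nz)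
    simp only [gaux] at hx
    rw [div_eq_zero_iff] at hx
    rcases hx with hx | hx
    · by_contra hx0
      exact hker x.num (Rat.num_ne_zero.mpr hx0) hx
    · exact absurd hx hxd.ne'

include h1 in
lemma gnorm_int (n : ℤ) :
    gnorm hnn h0 h1 hadd hmul hker (n : ℚ) = f n := gaux_int h1 n

end Aux

open Classical in
/-- Ostrowski-type classification of the points of the Berkovich spectrum `M(ℤ)`:
every multiplicative seminorm on `ℤ` bounded by the archimedean absolute value is
either `|·|_∞^ε` for some `ε ∈ [0,1]`, or `|·|_p^ε` for some prime `p` and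
`ε ∈ [0,∞]`, where `ε = ∞` gives the seminorm which is `0` on multiples of `p`
and `1` elsewhere. -/
theorem berkovich_spectrum_int_classification (f : ℤ → ℝ)
    (hnn : ∀ n, 0 ≤ f n) (h0 : f 0 = 0) (h1 : f 1 = 1)
    (hadd : ∀ m n, f (m + n) ≤ f m + f n)
    (hmul : ∀ m n, f (m * n) = f m * f n)
    (hb : ∀ n : ℤ, f n ≤ |(n : ℝ)|) :
    (∃ ε : ℝ, ε ∈ Set.Icc (0 : ℝ) 1 ∧ ∀ n : ℤ, n ≠ 0 → f n = |(n : ℝ)| ^ ε) ∨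
    (∃ p : ℕ, p.Prime ∧
      ((∃ ε : ℝ, 0 ≤ ε ∧
          ∀ n : ℤ, n ≠ 0 → f n = (p : ℝ) ^ (-(ε * (padicValInt p n : ℝ)))) ∨
        (∀ n : ℤ, n ≠ 0 → f n = if (p : ℤ) ∣ n then 0 else 1))) := by
  by_cases hkex : ∃ n : ℤ, n ≠ 0 ∧ f n = 0
  · -- nontrivial kernel: `ε = ∞` case
    obtain ⟨p, hp, hfp⟩ := faux_exists_prime hnn h1 hmul hkex
    exact Or.inr ⟨p, hp, Or.inr (faux_ker hnn h1 hadd hmul hp hfp)⟩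
  push_neg at hkex
  have hker : ∀ n : ℤ, n ≠ 0 → f n ≠ 0 := hkex
  by_cases htriv : ∀ n : ℤ, n ≠ 0 → f n = 1
  · -- trivial seminorm: `ε = 0`
    refine Or.inl ⟨0, ⟨le_refl 0, zero_le_one⟩, fun n hn => ?_⟩
    rw [htriv n hn, Real.rpow_zero]
  · -- genuine nontrivial absolute value: use Ostrowski for `ℚ`
    push_neg at htriv
    obtain ⟨n₀, hn₀, hfn₀⟩ := htriv
    set g := gnorm hnn h0 h1 hadd hmul hker with hg
    have hgint : ∀ n : ℤ, g (n : ℚ) = f n := gnorm_int hnn h0 h1 hadd hmul hker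
    have hgnontriv : g ≠ 1 := by
      intro h
      apply hfn₀
      rw [← hgint n₀, h, MulRingNorm.apply_one]
      simp [hn₀]
    rcases (show (∃ c : ℝ, 0 < c ∧ (fun x : ℚ => g x ^ c) = fun x => Rat.AbsoluteValue.real x) ∨
        ∃ p : ℕ, (∃ (_ : Fact p.Prime), ∃ c : ℝ, 0 < c ∧
          (fun x : ℚ => g x ^ c) = fun x => Rat.AbsoluteValue.padic p x) ∧ True from by
      have hnt : (MulRingNorm.mulRingNormEquivAbsoluteValue g).IsNontrivial :=
        ⟨(n₀ : ℚ), by exact_mod_cast hn₀, by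
          rw [MulRingNorm.mulRingNormEquivAbsoluteValue_apply, hgint]; exact hfn₀⟩
      rcases Rat.AbsoluteValue.equiv_real_or_padic _ hnt with h | ⟨p, ⟨hf, h⟩, -⟩
      · exact Or.inl (AbsoluteValue.isEquiv_iff_exists_rpow_eq.mp h)
      · exact Or.inr ⟨p, ⟨hf, AbsoluteValue.isEquiv_iff_exists_rpow_eq.mp h⟩, trivial⟩)
      with harch | hpadic
    · -- archimedean case
      obtain ⟨c, hc, hceq⟩ := harch
      left
      refine ⟨c⁻¹, ⟨by positivity, ?_⟩, fun n hn => ?_⟩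
      · -- c⁻¹ ≤ 1
        have h2 : f 2 ^ c = |(2 : ℝ)| := by
          have := congrFun hceq ((2 : ℤ) : ℚ)
          simp only [hgint] at this
          rw [this, Rat.AbsoluteValue.real_eq_abs]
          push_cast
          norm_num
        have hf2 : f 2 = (2 : ℝ) ^ (c⁻¹ : ℝ) := by
          rw [← Real.rpow_rpow_inv (hnn 2) hc.ne', h2]
          norm_num
        have hle : (2 : ℝ) ^ (c⁻¹ : ℝ) ≤ (2 : ℝ) ^ (1 : ℝ) := by
          rw [Real.rpow_one, ← hf2]
          have := hb 2
          norm_num at this ⊢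
          exact this
        exact (Real.rpow_le_rpow_left_iff one_lt_two).mp hle
      · have hfc : f n ^ c = |(n : ℝ)| := by
          have := congrFun hceq ((n : ℤ) : ℚ)
          simp only [hgint] at this
          rw [this, Rat.AbsoluteValue.real_eq_abs]
          push_cast
          ring_nf
        rw [← Real.rpow_rpow_inv (hnn n) hc.ne', hfc]
    · -- p-adic case
      obtain ⟨p, ⟨hfact, c, hc, hceq⟩, -⟩ := hpadic
      have hp : p.Prime := hfact.out
      right
      refine ⟨p, hp, Or.inl ⟨c⁻¹, by positivity, fun n hn => ?_⟩⟩
      have hfc : f n ^ c = (p : ℝ) ^ (-(padicValInt p n : ℤ)) := by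
        have := congrFun hceq ((n : ℤ) : ℚ)
        simp only [hgint] at this
        rw [this]
        show ((padicNorm p ((n : ℤ) : ℚ) : ℚ) : ℝ) = _
        rw [padicNorm.eq_zpow_of_nonzero (by exact_mod_cast hn), padicValRat.of_int]
        push_cast
        norm_num
      rw [← Real.rpow_rpow_inv (hnn n) hc.ne', hfc, ← Real.rpow_intCast (p : ℝ),
        ← Real.rpow_mul (by positivity)]
      congr 1
      push_cast
      ring
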